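/- arXiv:0903.4902 — 3 statements merged into one kernel-verified Lean document; each statement's English description precedes it below -/
import Mathlib

section
/- Let μ ∈ (0,1), let c : ℝ → ℝ be continuously differentiable with c(0) > 0, and suppose r : ℕ × ℝ → ℝ satisfies |r(ν,λ)| ≤ ε_ν·μ^ν and |∂_λ r(ν,λ)| ≤ ε_ν·μ^ν for λ in a fixed neighborhood of 0, where ε_ν → 0. Then there is N such that for every ν > N the equation λ + c(λ)·μ^ν + r(ν,λ) = 0 has a unique solution λ_ν in that neighborhood, and the sequence (λ_ν) is eventually strictly monotonically increasing with λ_ν → 0 and λ_ν = -c(0)μ^ν(1 + o(1)). -/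
open Filter

/-- Corollary `Xi_r_zeros_n=3` (i): for `μ ∈ (0,1)`, `c(0) > 0`, the zeros `λ_ν` of
`λ + c(λ)μ^ν + r(ν,λ)` are unique near `0`, eventually strictly increasing,
tend to `0`, and satisfy `λ_ν = -c(0)μ^ν(1+o(1))`. -/
theorem stmt_1 (μ : ℝ) (hμ : μ ∈ Set.Ioo (0:ℝ) 1)
    (c : ℝ → ℝ) (hc : ContDiff ℝ 1 c) (hc0 : 0 < c 0)
    (δ : ℝ) (hδ : 0 < δ)
    (r r' : ℕ → ℝ → ℝ) (ε : ℕ → ℝ) (hε : Tendsto ε atTop (nhds 0))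
    (hr' : ∀ ν : ℕ, ∀ lam ∈ Metric.closedBall (0:ℝ) δ, HasDerivAt (r ν) (r' ν lam) lam)
    (hrb : ∀ ν : ℕ, ∀ lam ∈ Metric.closedBall (0:ℝ) δ, |r ν lam| ≤ ε ν * μ ^ ν)
    (hr'b : ∀ ν : ℕ, ∀ lam ∈ Metric.closedBall (0:ℝ) δ, |r' ν lam| ≤ ε ν * μ ^ ν) :
    ∃ N : ℕ, ∃ l : ℕ → ℝ,
      (∀ ν > N, l ν ∈ Metric.closedBall (0:ℝ) δ ∧
        l ν + c (l ν) * μ ^ ν + r ν (l ν) = 0 ∧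
        ∀ lam ∈ Metric.closedBall (0:ℝ) δ,
          lam + c lam * μ ^ ν + r ν lam = 0 → lam = l ν) ∧
      (∃ N' : ℕ, ∀ ν ≥ N', l ν < l (ν + 1)) ∧
      Tendsto l atTop (nhds 0) ∧
      Tendsto (fun ν => l ν / (-(c 0) * μ ^ ν)) atTop (nhds 1) := by
  classical
  obtain ⟨hμ0, hμ1⟩ := hμ
  have hball : Metric.closedBall (0:ℝ) δ = Set.Icc (-δ) δ := by
    rw [Real.closedBall_eq_Icc, zero_sub, zero_add]
  obtain ⟨C1, hC1⟩ := (isCompact_Icc (a := -δ) (b := δ)).exists_bound_of_continuousOn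
    hc.continuous.continuousOn
  obtain ⟨C2, hC2⟩ := (isCompact_Icc (a := -δ) (b := δ)).exists_bound_of_continuousOn
    (hc.continuous_deriv le_rfl).continuousOn
  set C : ℝ := max C1 C2 + 1 with hCdef
  have hCc : ∀ x ∈ Set.Icc (-δ) δ, |c x| ≤ C := by
    intro x hx
    have := hC1 x hx
    simp only [Real.norm_eq_abs] at this
    have : C1 ≤ max C1 C2 := le_max_left _ _
    have := hC1 x hx
    simp only [Real.norm_eq_abs] at this
    calc |c x| ≤ C1 := this
      _ ≤ max C1 C2 + 1 := by linarith [le_max_left C1 C2]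
  have hCc' : ∀ x ∈ Set.Icc (-δ) δ, |deriv c x| ≤ C := by
    intro x hx
    have := hC2 x hx
    simp only [Real.norm_eq_abs] at this
    calc |deriv c x| ≤ C2 := this
      _ ≤ max C1 C2 + 1 := by linarith [le_max_right C1 C2]
  have hpow : Tendsto (fun ν : ℕ => μ ^ ν) atTop (nhds 0) :=
    tendsto_pow_atTop_nhds_zero_of_lt_one hμ0.le hμ1
  have hsmall : ∀ᶠ ν in atTop, (C + ε ν) * μ ^ ν < min 1 δ := by
    have h : Tendsto (fun ν => (C + ε ν) * μ ^ ν) atTop (nhds 0) := by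
      have := ((tendsto_const_nhds (x := C)).add hε).mul hpow
      simpa using this
    exact h.eventually_lt_const (lt_min one_pos hδ)
  obtain ⟨N, hN⟩ := eventually_atTop.mp hsmall
  -- key existence/uniqueness lemma
  have key : ∀ ν : ℕ, (C + ε ν) * μ ^ ν < min 1 δ →
      ∃! x, x ∈ Set.Icc (-δ) δ ∧ x + c x * μ ^ ν + r ν x = 0 := by
    intro ν hsm
    have hμν : 0 < μ ^ ν := pow_pos hμ0 ν
    have h1 : (C + ε ν) * μ ^ ν < 1 := lt_of_lt_of_le hsm (min_le_left _ _)
    have h2 : (C + ε ν) * μ ^ ν < δ := lt_of_lt_of_le hsm (min_le_right _ _)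
    set F : ℝ → ℝ := fun x => x + c x * μ ^ ν + r ν x with hF
    have hcont : ContinuousOn F (Set.Icc (-δ) δ) := by
      apply ContinuousOn.add
      · exact continuousOn_id.add (hc.continuous.continuousOn.mul continuousOn_const)
      · intro x hx
        exact (hr' ν x (by rw [hball]; exact hx)).continuousAt.continuousWithinAt
    have hderiv : ∀ x ∈ Set.Icc (-δ) δ,
        HasDerivAt F (1 + deriv c x * μ ^ ν + r' ν x) x := by
      intro x hx
      exact ((hasDerivAt_id x).add ((hc.differentiable one_ne_zero x).hasDerivAt.mul_const _)).add
        (hr' ν x (by rw [hball]; exact hx))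
    have hmono : StrictMonoOn F (Set.Icc (-δ) δ) := by
      apply StrictMonoOn.mono ?_ (le_refl _)
      apply strictMonoOn_of_deriv_pos (convex_Icc _ _) hcont
      intro x hx
      have hx' : x ∈ Set.Icc (-δ) δ := interior_subset hx
      rw [(hderiv x hx').deriv]
      have h3 := abs_le.mp (hCc' x hx')
      have h4 := abs_le.mp (hr'b ν x (by rw [hball]; exact hx'))
      nlinarith [mul_le_mul_of_nonneg_right h3.1 hμν.le]
    have hmδ : (-δ:ℝ) ∈ Set.Icc (-δ) δ := by constructor <;> linarith
    have hpδ : (δ:ℝ) ∈ Set.Icc (-δ) δ := by constructor <;> linarith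
    have hFneg : F (-δ) < 0 := by
      have h3 := abs_le.mp (hCc _ hmδ)
      have h4 := abs_le.mp (hrb ν _ (by rw [hball]; exact hmδ))
      have := mul_le_mul_of_nonneg_right h3.2 hμν.le
      simp only [hF]
      nlinarith
    have hFpos : 0 < F δ := by
      have h3 := abs_le.mp (hCc _ hpδ)
      have h4 := abs_le.mp (hrb ν _ (by rw [hball]; exact hpδ))
      have := mul_le_mul_of_nonneg_right h3.1 hμν.le
      simp only [hF]
      nlinarith
    obtain ⟨x, hx, hFx⟩ := intermediate_value_Icc (by linarith : (-δ:ℝ) ≤ δ) hcont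
      (Set.mem_Icc.mpr ⟨hFneg.le, hFpos.le⟩)
    refine ⟨x, ⟨hx, hFx⟩, ?_⟩
    rintro y ⟨hy, hFy⟩
    exact hmono.injOn hy hx (hFy.trans hFx.symm)
  -- define the zeros
  set l : ℕ → ℝ := fun ν => if h : N ≤ ν then (key ν (hN ν h)).choose else 0 with hldef
  have hlspec : ∀ ν, N ≤ ν → l ν ∈ Set.Icc (-δ) δ ∧
      (l ν + c (l ν) * μ ^ ν + r ν (l ν) = 0) ∧
      ∀ y ∈ Set.Icc (-δ) δ, y + c y * μ ^ ν + r ν y = 0 → y = l ν := by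
    intro ν hν
    have h := (key ν (hN ν hν)).choose_spec
    have he : l ν = (key ν (hN ν hν)).choose := by simp [hldef, hν]
    rw [he]
    exact ⟨h.1.1, h.1.2, fun y hy hFy => h.2 y ⟨hy, hFy⟩⟩
  -- l tends to 0
  have hεnn : ∀ ν, 0 ≤ ε ν := by
    intro ν
    have h := hrb ν 0 (by simp [hδ.le])
    have := abs_nonneg (r ν 0)
    nlinarith [pow_pos hμ0 ν]
  have hlb : ∀ᶠ ν in atTop, ‖l ν‖ ≤ (C + ε ν) * μ ^ ν := by
    filter_upwards [eventually_ge_atTop N] with ν hν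
    obtain ⟨hmem, hzero, -⟩ := hlspec ν hν
    have hμν : (0:ℝ) < μ ^ ν := pow_pos hμ0 ν
    have h3 := abs_le.mp (hCc _ hmem)
    have h4 := abs_le.mp (hrb ν _ (by rw [hball]; exact hmem))
    rw [Real.norm_eq_abs, abs_le]
    constructor <;>
      nlinarith [mul_le_mul_of_nonneg_right h3.1 hμν.le,
        mul_le_mul_of_nonneg_right h3.2 hμν.le]
  have hCε : Tendsto (fun ν => (C + ε ν) * μ ^ ν) atTop (nhds 0) := by
    have := ((tendsto_const_nhds (x := C)).add hε).mul hpow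
    simpa using this
  have hl0 : Tendsto l atTop (nhds 0) := squeeze_zero_norm' hlb hCε
  -- the ratio tends to 1
  have hcl : Tendsto (fun ν => c (l ν)) atTop (nhds (c 0)) :=
    (hc.continuous.tendsto 0).comp hl0
  have hterm2 : Tendsto (fun ν => r ν (l ν) / (c 0 * μ ^ ν)) atTop (nhds 0) := by
    have hb : ∀ᶠ ν in atTop, ‖r ν (l ν) / (c 0 * μ ^ ν)‖ ≤ ε ν / c 0 := by
      filter_upwards [eventually_ge_atTop N] with ν hν
      obtain ⟨hmem, -, -⟩ := hlspec ν hν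
      have hμν : (0:ℝ) < μ ^ ν := pow_pos hμ0 ν
      have hden : (0:ℝ) < c 0 * μ ^ ν := by positivity
      rw [Real.norm_eq_abs, abs_div, abs_of_pos hden]
      have h4 := hrb ν _ (by rw [hball]; exact hmem)
      calc |r ν (l ν)| / (c 0 * μ ^ ν) ≤ (ε ν * μ ^ ν) / (c 0 * μ ^ ν) := by gcongr
        _ = ε ν / c 0 := by
            rw [mul_comm (ε ν) (μ ^ ν), mul_comm (c 0) (μ ^ ν), mul_div_mul_left _ _ hμν.ne']
    exact squeeze_zero_norm' hb (by simpa using hε.div_const (c 0))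
  have hratio : Tendsto (fun ν => l ν / (-(c 0) * μ ^ ν)) atTop (nhds 1) := by
    have heq : ∀ᶠ ν in atTop,
        c (l ν) / c 0 + r ν (l ν) / (c 0 * μ ^ ν) = l ν / (-(c 0) * μ ^ ν) := by
      filter_upwards [eventually_ge_atTop N] with ν hν
      obtain ⟨-, hzero, -⟩ := hlspec ν hν
      have hμν : (μ:ℝ) ^ ν ≠ 0 := (pow_pos hμ0 ν).ne'
      have hc0' : c 0 ≠ 0 := hc0.ne'
      field_simp
      linear_combination hzero
    have h2 : Tendsto (fun ν => c (l ν) / c 0 + r ν (l ν) / (c 0 * μ ^ ν)) atTop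
        (nhds (c 0 / c 0 + 0)) := (hcl.div_const _).add hterm2
    rw [div_self hc0.ne', add_zero] at h2
    exact h2.congr' heq
  -- eventual monotonicity
  have hmono : ∀ᶠ ν in atTop, l ν < l (ν + 1) := by
    have hshift : Tendsto (fun ν => l (ν + 1) / (-(c 0) * μ ^ (ν + 1))) atTop (nhds 1) :=
      hratio.comp (tendsto_add_atTop_nat 1)
    have hdiff : Tendsto (fun ν =>
        μ * (l (ν + 1) / (-(c 0) * μ ^ (ν + 1))) - l ν / (-(c 0) * μ ^ ν)) atTop
        (nhds (μ * 1 - 1)) := ((tendsto_const_nhds (x := μ)).mul hshift).sub hratio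
    have hev : ∀ᶠ ν in atTop,
        μ * (l (ν + 1) / (-(c 0) * μ ^ (ν + 1))) - l ν / (-(c 0) * μ ^ ν) < 0 :=
      hdiff.eventually_lt_const (by linarith)
    filter_upwards [hev] with ν hν
    have hμν : (0:ℝ) < μ ^ ν := pow_pos hμ0 ν
    have hd : (-(c 0) * μ ^ ν) < 0 := by nlinarith
    have hd1 : (-(c 0) * μ ^ (ν + 1)) ≠ 0 := by
      have : (0:ℝ) < μ ^ (ν + 1) := pow_pos hμ0 _
      nlinarith
    have e1 : l ν = (l ν / (-(c 0) * μ ^ ν)) * (-(c 0) * μ ^ ν) :=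
      (div_mul_cancel₀ _ hd.ne).symm
    have e2 : l (ν + 1) = (l (ν + 1) / (-(c 0) * μ ^ (ν + 1))) * (-(c 0) * μ ^ (ν + 1)) :=
      (div_mul_cancel₀ _ hd1).symm
    rw [e1, e2]
    have hlt : μ * (l (ν + 1) / (-(c 0) * μ ^ (ν + 1))) < l ν / (-(c 0) * μ ^ ν) := by
      linarith
    have := mul_lt_mul_of_neg_right hlt hd
    calc (l ν / (-(c 0) * μ ^ ν)) * (-(c 0) * μ ^ ν)
        < (μ * (l (ν + 1) / (-(c 0) * μ ^ (ν + 1)))) * (-(c 0) * μ ^ ν) := this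
      _ = (l (ν + 1) / (-(c 0) * μ ^ (ν + 1))) * (-(c 0) * μ ^ (ν + 1)) := by
          rw [pow_succ]; ring
  obtain ⟨N', hN'⟩ := eventually_atTop.mp hmono
  refine ⟨N, l, ?_, ⟨N', hN'⟩, hl0, hratio⟩
  intro ν hν
  obtain ⟨hmem, hzero, huniq⟩ := hlspec ν hν.le
  exact ⟨by rw [hball]; exact hmem, hzero,
    fun lam hlam h => huniq lam (by rw [← hball]; exact hlam) h⟩
end

section
/- Let A be an invertible real n×n matrix whose spectrum splits as σ_s ∪ σ_u with |μ| < 1 for μ ∈ σ_s and |μ| > 1 for μ ∈ σ_u, and suppose the largest modulus element μ_s of σ_s is real, simple, with eigenvector e_s, and the adjoint eigenvector ψ_s of Aᵀ for μ_s satisfies ⟨ψ_s, e_s⟩ ≠ 0. If v ∈ ℝⁿ lies in the stable subspace of A and ⟨ψ_s, v⟩ ≠ 0, then Aⁿv = c·μ_sⁿ·e_s + o(|μ_s|ⁿ) as n → ∞, for some constant c ≠ 0. -/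
open Filter Matrix Polynomial

section Aux

lemma aux_charpoly_dvd {ι : Type*} [Fintype ι] [DecidableEq ι] {R : Type*} [CommRing R]
    (M : Matrix ι ι R) (μ : R) (i j : ι) (hij : i ≠ j)
    (hi : ∀ k, M k i = if k = i then μ else 0)
    (hj : ∀ k, M k j = if k = j then μ else 0) :
    (X - C μ) ^ 2 ∣ M.charpoly := by
  set N := charmatrix M with hN
  have coli : (fun k => N k i) = (X - C μ) • (Pi.single i 1 : ι → R[X]) := by
    funext k
    by_cases hk : k = i
    · subst hk
      simp [hN, charmatrix_apply_eq, hi k, Pi.single_apply]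
    · simp [hN, charmatrix_apply_ne _ _ _ hk, hi k, hk, Pi.single_apply]
  set N1 := N.updateCol i ((Pi.single i 1 : ι → R[X])) with hN1
  have colj : (fun k => N1 k j) = (X - C μ) • (Pi.single j 1 : ι → R[X]) := by
    funext k
    rw [hN1, Matrix.updateCol_ne (Ne.symm hij)]
    by_cases hk : k = j
    · subst hk
      simp [hN, charmatrix_apply_eq, hj k, Pi.single_apply]
    · simp [hN, charmatrix_apply_ne _ _ _ hk, hj k, hk, Pi.single_apply]
  have e1 : M.charpoly = (X - C μ) * N1.det := by
    rw [Matrix.charpoly, ← Matrix.det_updateCol_smul, ← coli, Matrix.updateCol_eq_self]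
  have e2 : N1.det = (X - C μ) * (N1.updateCol j ((Pi.single j 1 : ι → R[X]))).det := by
    rw [← Matrix.det_updateCol_smul, ← colj, Matrix.updateCol_eq_self]
  rw [e1, e2, ← mul_assoc, ← sq]
  exact Dvd.intro _ rfl



lemma aux_two_eigvec {m : ℕ} (A : Matrix (Fin m) (Fin m) ℝ) (μ : ℝ) (x y : Fin m → ℝ)
    (hxy : LinearIndependent ℝ ![x, y])
    (hx : A.mulVec x = μ • x) (hy : A.mulVec y = μ • y) :
    (X - C μ) ^ 2 ∣ A.charpoly := by
  classical
  have hs : LinearIndepOn ℝ id (Set.range ![x, y]) :=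
    hxy.linearIndepOn_id
  let b := Module.Basis.extend hs
  haveI : Fintype (hs.extend (Set.subset_univ _)) :=
    FiniteDimensional.fintypeBasisIndex b
  have hxm : x ∈ hs.extend (Set.subset_univ _) :=
    hs.subset_extend _ ⟨0, by simp⟩
  have hym : y ∈ hs.extend (Set.subset_univ _) :=
    hs.subset_extend _ ⟨1, by simp⟩
  set ix : hs.extend (Set.subset_univ _) := ⟨x, hxm⟩ with hix
  set iy : hs.extend (Set.subset_univ _) := ⟨y, hym⟩ with hiy
  have hxy' : x ≠ y := by
    intro h
    have h01 : (![x, y] : Fin 2 → (Fin m → ℝ)) 0 = ![x, y] 1 := by simp [h]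
    exact absurd (hxy.injective h01) (by decide)
  have hij : ix ≠ iy := fun h => hxy' (congrArg Subtype.val h)
  have hbx : b ix = x := Module.Basis.extend_apply_self hs ix
  have hby : b iy = y := Module.Basis.extend_apply_self hs iy
  set f := Matrix.toLin' A with hf
  set M := LinearMap.toMatrix b b f with hM
  have hcol : ∀ (p : hs.extend (Set.subset_univ _)) (pv : Fin m → ℝ), b p = pv →
      A.mulVec pv = μ • pv → ∀ k, M k p = if k = p then μ else 0 := by
    intro p pv hbp hev k
    rw [hM, LinearMap.toMatrix_apply, hbp, hf, Matrix.toLin'_apply, hev, _root_.map_smul,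
      ← hbp, b.repr_self]
    simp [Finsupp.single_apply, eq_comm]
  have hdvd : (X - C μ) ^ 2 ∣ M.charpoly :=
    aux_charpoly_dvd M μ ix iy hij (hcol ix x hbx hx) (hcol iy y hby hy)
  have hMc : M.charpoly = A.charpoly := by
    have h1 := LinearMap.charpoly_toMatrix f b
    have h2 := LinearMap.charpoly_toMatrix f (Pi.basisFun ℝ (Fin m))
    rw [LinearMap.toMatrix_eq_toMatrix', hf, LinearMap.toMatrix'_toLin'] at h2
    rw [hM, h1, ← h2]
  rwa [hMc] at hdvd


lemma aux_decay {V : Type*} [NormedAddCommGroup V] [NormedSpace ℂ V]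
    [FiniteDimensional ℂ V] (g : V →ₗ[ℂ] V)
    (hspec : ∀ z : ℂ, ∀ u : V, u ≠ 0 → g u = z • u → ‖z‖ < 1) (u : V) :
    Tendsto (fun k : ℕ => ‖(g ^ k) u‖) atTop (nhds 0) := by
  by_cases hu0 : u = 0
  · simpa [hu0] using (tendsto_const_nhds : Tendsto (fun _ : ℕ => (0 : ℝ)) atTop (nhds 0))
  haveI : Nontrivial V := ⟨u, 0, hu0⟩
  haveI : CompleteSpace V := FiniteDimensional.complete ℂ V
  set F : V →L[ℂ] V := LinearMap.toContinuousLinearMap g with hF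
  have hFg : ∀ (k : ℕ) (x : V), (F ^ k) x = (g ^ k) x := by
    intro k
    induction k with
    | zero => intro x; simp
    | succ k ih =>
      intro x
      rw [pow_succ, pow_succ, ContinuousLinearMap.mul_apply, Module.End.mul_apply, ih]
      rfl
  have hsp : ∀ z ∈ spectrum ℂ F, ‖z‖₊ < 1 := by
    intro z hz
    rw [spectrum.mem_iff] at hz
    set t : V →ₗ[ℂ] V := z • LinearMap.id - g with ht
    have hker : LinearMap.ker t ≠ ⊥ := by
      intro hbot
      apply hz
      rw [ContinuousLinearMap.isUnit_iff_bijective]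
      have hinj : Function.Injective (t : V → V) := by
        rw [← LinearMap.ker_eq_bot]; exact hbot
      have hsurj : Function.Surjective (t : V → V) :=
        (LinearMap.injective_iff_surjective).mp hinj
      have heq : ⇑(algebraMap ℂ (V →L[ℂ] V) z - F) = ⇑t := by
        funext x
        simp [ht, Algebra.algebraMap_eq_smul_one, hF]
      rw [heq]
      exact ⟨hinj, hsurj⟩
    obtain ⟨w, hw, hw0⟩ := Submodule.exists_mem_ne_zero_of_ne_bot hker
    rw [LinearMap.mem_ker, ht] at hw
    have hgw : g w = z • w := by
      have h1 : z • w - g w = 0 := by simpa using hw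
      have := sub_eq_zero.mp h1
      exact this.symm
    have := hspec z w hw0 hgw
    exact_mod_cast this
  have hsr : spectralRadius ℂ F < 1 := by
    have := spectrum.spectralRadius_lt_of_forall_lt F hsp
    simpa using this
  obtain ⟨ρ, hρ1, hρ2⟩ := ENNReal.lt_iff_exists_nnreal_btwn.mp hsr
  have hρlt1 : (ρ : ℝ) < 1 := by exact_mod_cast hρ2
  have hgel := spectrum.pow_nnnorm_pow_one_div_tendsto_nhds_spectralRadius F
  have hev : ∀ᶠ k : ℕ in atTop, (‖F ^ k‖₊ : ENNReal) ^ (1 / (k : ℝ)) < (ρ : ENNReal) :=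
    hgel.eventually_lt_const hρ1
  have hbound : ∀ᶠ k : ℕ in atTop, ‖(g ^ k) u‖ ≤ (ρ : ℝ) ^ k * ‖u‖ := by
    filter_upwards [hev, eventually_ge_atTop 1] with k hk hk1
    have hknz : (k : ℝ) ≠ 0 := Nat.cast_ne_zero.mpr (by omega)
    have hnorm : (‖F ^ k‖₊ : ENNReal) ≤ (ρ : ENNReal) ^ k := by
      have h1 : ((‖F ^ k‖₊ : ENNReal) ^ (1 / (k : ℝ))) ^ (k : ℕ) ≤ (ρ : ENNReal) ^ k :=
        pow_le_pow_left' hk.le k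
      rwa [← ENNReal.rpow_natCast ((‖F ^ k‖₊ : ENNReal) ^ (1 / (k : ℝ))),
        ← ENNReal.rpow_mul, one_div, inv_mul_cancel₀ hknz, ENNReal.rpow_one] at h1
    have hnorm' : ‖F ^ k‖ ≤ (ρ : ℝ) ^ k := by
      have : ‖F ^ k‖₊ ≤ ρ ^ k := by exact_mod_cast hnorm
      calc ‖F ^ k‖ = ((‖F ^ k‖₊ : NNReal) : ℝ) := rfl
        _ ≤ ((ρ ^ k : NNReal) : ℝ) := by exact_mod_cast this
        _ = (ρ : ℝ) ^ k := by push_cast; ring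
    calc ‖(g ^ k) u‖ = ‖(F ^ k) u‖ := by rw [hFg]
      _ ≤ ‖F ^ k‖ * ‖u‖ := (F ^ k).le_opNorm u
      _ ≤ (ρ : ℝ) ^ k * ‖u‖ := by
          apply mul_le_mul_of_nonneg_right hnorm' (norm_nonneg u)
  have hlim : Tendsto (fun k : ℕ => (ρ : ℝ) ^ k * ‖u‖) atTop (nhds 0) := by
    have h0 : Tendsto (fun k : ℕ => (ρ : ℝ) ^ k) atTop (nhds 0) :=
      tendsto_pow_atTop_nhds_zero_of_lt_one ρ.coe_nonneg hρlt1
    simpa using h0.mul_const ‖u‖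
  exact squeeze_zero' (Eventually.of_forall fun k => norm_nonneg _) hbound hlim

end Aux

open Filter Matrix



/-- Leading-order asymptotics of iterates in the stable subspace of a hyperbolic
matrix with a real simple leading stable eigenvalue (underlying `est_beta` in the
proof of Lemma `lambdalemma_b`). -/
theorem stmt_7 (n : ℕ) (A : Matrix (Fin n) (Fin n) ℝ) (hA : IsUnit A.det)
    (hhyp : ∀ z ∈ spectrum ℂ (A.map (algebraMap ℝ ℂ)), ‖z‖ ≠ 1)
    (μs : ℝ) (hμs0 : 0 < |μs|) (hμs1 : |μs| < 1)
    (es : Fin n → ℝ) (hes : es ≠ 0) (hAes : A.mulVec es = μs • es)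
    (hlead : ∀ z ∈ spectrum ℂ (A.map (algebraMap ℝ ℂ)),
      ‖z‖ < 1 → z = (μs : ℂ) ∨ ‖z‖ < |μs|)
    (hsimple : Polynomial.rootMultiplicity μs A.charpoly = 1)
    (ψs : Fin n → ℝ) (hψs : ψs ≠ 0) (hAψs : Aᵀ.mulVec ψs = μs • ψs)
    (hnondeg : ψs ⬝ᵥ es ≠ 0)
    (v : Fin n → ℝ)
    (hvstable : Tendsto (fun k : ℕ => (A ^ k).mulVec v) atTop (nhds 0))
    (hvflip : ψs ⬝ᵥ v ≠ 0) :
    ∃ c : ℝ, c ≠ 0 ∧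
      Tendsto (fun k : ℕ => ‖(A ^ k).mulVec v - (c * μs ^ k) • es‖ / |μs| ^ k)
        atTop (nhds 0) := by
  classical
  have hμne : μs ≠ 0 := fun h => by simp [h] at hμs0
  have hμcne : (μs : ℂ) ≠ 0 := Complex.ofReal_ne_zero.mpr hμne
  -- iterates of the eigenvector
  have hAespow : ∀ k : ℕ, (A ^ k).mulVec es = μs ^ k • es := by
    intro k
    induction k with
    | zero => simp
    | succ k ih =>
      rw [pow_succ, ← Matrix.mulVec_mulVec, hAes, Matrix.mulVec_smul, ih, smul_smul,
        mul_comm, ← pow_succ]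
  set c : ℝ := (ψs ⬝ᵥ v) / (ψs ⬝ᵥ es) with hc
  have hc0 : c ≠ 0 := div_ne_zero hvflip hnondeg
  set w : Fin n → ℝ := v - c • es with hw
  have hAw : ∀ k : ℕ, (A ^ k).mulVec w = (A ^ k).mulVec v - (c * μs ^ k) • es := by
    intro k
    rw [hw, Matrix.mulVec_sub, Matrix.mulVec_smul, hAespow, smul_smul]
  -- w is in the stable set, annihilated by ψs
  have hWten : Tendsto (fun k : ℕ => (A ^ k).mulVec w) atTop (nhds 0) := by
    have h2 : Tendsto (fun k : ℕ => (c * μs ^ k) • es) atTop (nhds 0) := by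
      have h3 : Tendsto (fun k : ℕ => c * μs ^ k) atTop (nhds 0) := by
        have := (tendsto_pow_atTop_nhds_zero_of_abs_lt_one hμs1).const_mul c
        simpa using this
      have := h3.smul_const es
      simpa using this
    have := hvstable.sub h2
    simp only [sub_zero] at this
    simp only [hAw]
    exact this
  have hψw : ψs ⬝ᵥ w = 0 := by
    rw [hw, dotProduct_sub, dotProduct_smul, hc, smul_eq_mul,
      div_mul_cancel₀ _ hnondeg, sub_self]
  -- complexification
  set cx : (Fin n → ℝ) → (Fin n → ℂ) := fun x i => (x i : ℂ) with hcx
  set Ac : Matrix (Fin n) (Fin n) ℂ := A.map (algebraMap ℝ ℂ) with hAc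
  have hmap : ∀ (B : Matrix (Fin n) (Fin n) ℝ) (x : Fin n → ℝ),
      (B.map (algebraMap ℝ ℂ)).mulVec (cx x) = cx (B.mulVec x) := by
    intro B x
    funext i
    simp [Matrix.mulVec, dotProduct, hcx]
  have hpow : ∀ k : ℕ, (A ^ k).map (algebraMap ℝ ℂ) = Ac ^ k := by
    intro k
    have := map_pow ((algebraMap ℝ ℂ).mapMatrix) A k
    simpa [RingHom.mapMatrix_apply, hAc] using this
  have hcxsmul : ∀ (r : ℝ) (x : Fin n → ℝ), cx (r • x) = (r : ℂ) • cx x := by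
    intro r x; funext i; simp [hcx]
  have hnormcx : ∀ x : Fin n → ℝ, ‖cx x‖ = ‖x‖ := by
    intro x
    simp [hcx, Pi.norm_def, Pi.nnnorm_def, Complex.nnnorm_real]
  set ψc : Fin n → ℂ := cx ψs with hψc
  have hAψc : Acᵀ.mulVec ψc = (μs : ℂ) • ψc := by
    rw [hAc, ← Matrix.transpose_map, hψc, hmap, hAψs, hcxsmul]
  have hdotcx : ∀ a b : Fin n → ℝ, cx a ⬝ᵥ cx b = ((a ⬝ᵥ b : ℝ) : ℂ) := by
    intro a b
    simp [hcx, dotProduct]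
  -- the invariant subspace
  set W : Submodule ℂ (Fin n → ℂ) :=
    { carrier := {x | ψc ⬝ᵥ x = 0 ∧ Tendsto (fun k : ℕ => (Ac ^ k).mulVec x) atTop (nhds 0)}
      add_mem' := by
        rintro a b ⟨ha1, ha2⟩ ⟨hb1, hb2⟩
        refine ⟨by rw [dotProduct_add, ha1, hb1, add_zero], ?_⟩
        have := ha2.add hb2
        simpa [Matrix.mulVec_add] using this
      zero_mem' := by
        refine ⟨dotProduct_zero _, ?_⟩
        simpa [Matrix.mulVec_zero] using
          (tendsto_const_nhds : Tendsto (fun _ : ℕ => (0 : Fin n → ℂ)) atTop (nhds 0))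
      smul_mem' := by
        rintro r x ⟨h1, h2⟩
        refine ⟨by rw [dotProduct_smul, h1, smul_zero], ?_⟩
        have := h2.const_smul r
        simpa [Matrix.mulVec_smul] using this } with hW
  have hWmem : ∀ x : Fin n → ℂ, x ∈ W ↔
      (ψc ⬝ᵥ x = 0 ∧ Tendsto (fun k : ℕ => (Ac ^ k).mulVec x) atTop (nhds 0)) := by
    intro x; rfl
  have hWinv : ∀ x ∈ W, Ac.mulVecLin x ∈ W := by
    intro x hx
    rw [hWmem] at hx ⊢
    obtain ⟨h1, h2⟩ := hx
    constructor
    · rw [Matrix.mulVecLin_apply, Matrix.dotProduct_mulVec, ← Matrix.mulVec_transpose,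
        hAψc, smul_dotProduct, h1, smul_zero]
    · have h3 := h2.comp (tendsto_add_atTop_nat 1)
      have h4 : ∀ k : ℕ, (Ac ^ (k + 1)).mulVec x = (Ac ^ k).mulVec (Ac.mulVecLin x) := by
        intro k
        rw [Matrix.mulVecLin_apply, Matrix.mulVec_mulVec, ← pow_succ]
      simp only [Function.comp_def, h4] at h3
      exact h3
  -- the scaled restricted endomorphism
  set g : W →ₗ[ℂ] W := ((μs : ℂ))⁻¹ • ((Matrix.mulVecLin Ac).restrict hWinv) with hg
  have hgval : ∀ x : W, ((g x : Fin n → ℂ)) = (μs : ℂ)⁻¹ • Ac.mulVec (x : Fin n → ℂ) := by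
    intro x
    rw [hg, LinearMap.smul_apply, Submodule.coe_smul, LinearMap.restrict_coe_apply,
      Matrix.mulVecLin_apply]
  have hval : ∀ (k : ℕ) (x : W),
      (((g ^ k) x : Fin n → ℂ)) = ((μs : ℂ)⁻¹) ^ k • (Ac ^ k).mulVec (x : Fin n → ℂ) := by
    intro k
    induction k with
    | zero => intro x; simp
    | succ k ih =>
      intro x
      rw [pow_succ', Module.End.mul_apply, hgval, ih, Matrix.mulVec_smul, smul_smul,
        Matrix.mulVec_mulVec, ← pow_succ', ← pow_succ']
  -- the spectral hypothesis
  have hspec : ∀ z : ℂ, ∀ u : W, u ≠ 0 → g u = z • u → ‖z‖ < 1 := by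
    intro z u hu0 hgu
    set uv : Fin n → ℂ := (u : Fin n → ℂ) with huv
    have huv0 : uv ≠ 0 := fun h => hu0 (Subtype.ext h)
    have hgu' : (μs : ℂ)⁻¹ • Ac.mulVec uv = z • uv := by
      have := congrArg (Subtype.val) hgu
      rwa [hgval, Submodule.coe_smul] at this
    set ζ : ℂ := (μs : ℂ) * z with hζ
    have hAcu : Ac.mulVec uv = ζ • uv := by
      have := congrArg (fun t => (μs : ℂ) • t) hgu'
      simpa [smul_smul, mul_inv_cancel₀ hμcne, hζ] using this
    have hiter : ∀ k : ℕ, (Ac ^ k).mulVec uv = ζ ^ k • uv := by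
      intro k
      induction k with
      | zero => simp
      | succ k ih =>
        rw [pow_succ, ← Matrix.mulVec_mulVec, hAcu, Matrix.mulVec_smul, ih, smul_smul,
          mul_comm, ← pow_succ]
    have hmemW := u.2
    rw [hWmem] at hmemW
    have hζ1 : ‖ζ‖ < 1 := by
      have h2 := hmemW.2
      simp only [← huv, hiter] at h2
      have h3 : Tendsto (fun k : ℕ => ‖ζ‖ ^ k * ‖uv‖) atTop (nhds 0) := by
        have := h2.norm
        simpa [norm_smul] using this
      have h4 : Tendsto (fun k : ℕ => ‖ζ‖ ^ k) atTop (nhds 0) := by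
        have h5 := h3.mul_const ‖uv‖⁻¹
        have huvn : ‖uv‖ ≠ 0 := norm_ne_zero_iff.mpr huv0
        simp only [zero_mul] at h5
        have : (fun k : ℕ => ‖ζ‖ ^ k * ‖uv‖ * ‖uv‖⁻¹) = fun k : ℕ => ‖ζ‖ ^ k := by
          funext k; field_simp
        rwa [this] at h5
      by_contra hge
      push_neg at hge
      have h6 : (1 : ℝ) ≤ 0 := ge_of_tendsto' h4 fun k => one_le_pow₀ hge
      linarith
    have hζsp : ζ ∈ spectrum ℂ Ac := by
      rw [spectrum.mem_iff]
      intro hunit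
      have hker : (algebraMap ℂ (Matrix (Fin n) (Fin n) ℂ) ζ - Ac).mulVec uv = 0 := by
        rw [Algebra.algebraMap_eq_smul_one, Matrix.sub_mulVec, Matrix.smul_mulVec,
          Matrix.one_mulVec, hAcu, sub_self]
      have hdet : (algebraMap ℂ (Matrix (Fin n) (Fin n) ℂ) ζ - Ac).det = 0 :=
        Matrix.exists_mulVec_eq_zero_iff.mp ⟨uv, huv0, hker⟩
      have := (Matrix.isUnit_iff_isUnit_det _).mp hunit
      rw [hdet] at this
      exact not_isUnit_zero this
    have hζnorm : ‖ζ‖ = |μs| * ‖z‖ := by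
      rw [hζ, norm_mul, Complex.norm_real, Real.norm_eq_abs]
    rcases hlead ζ hζsp hζ1 with hζμ | hζlt
    · -- ζ = μs : contradiction with simplicity
      exfalso
      have hAcu' : Ac.mulVec uv = ((μs : ℝ) : ℂ) • uv := by rw [hAcu, hζμ]
      set x : Fin n → ℝ := fun i => (uv i).re with hx
      set y : Fin n → ℝ := fun i => (uv i).im with hy
      have hxev : A.mulVec x = μs • x := by
        funext i
        have h := congrArg Complex.re (congrFun hAcu' i)
        simpa [hAc, Matrix.mulVec, dotProduct, Matrix.map_apply, Complex.re_sum,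
          Complex.mul_re, hx, Pi.smul_apply, smul_eq_mul] using h
      have hyev : A.mulVec y = μs • y := by
        funext i
        have h := congrArg Complex.im (congrFun hAcu' i)
        simpa [hAc, Matrix.mulVec, dotProduct, Matrix.map_apply, Complex.im_sum,
          Complex.mul_im, hy, Pi.smul_apply, smul_eq_mul] using h
      have hψx : ψs ⬝ᵥ x = 0 := by
        have h := congrArg Complex.re hmemW.1
        simpa [hψc, hcx, dotProduct, Complex.re_sum, Complex.mul_re, hx] using h
      have hψy : ψs ⬝ᵥ y = 0 := by
        have h := congrArg Complex.im hmemW.1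
        simpa [hψc, hcx, dotProduct, Complex.im_sum, Complex.mul_im, hy] using h
      have key : ∀ p : Fin n → ℝ, p ≠ 0 → A.mulVec p = μs • p → ψs ⬝ᵥ p = 0 → False := by
        intro p hp0 hAp hψp
        have hli : LinearIndependent ℝ ![es, p] := by
          rw [LinearIndependent.pair_iff]
          intro s t hst
          have hdot : s * (ψs ⬝ᵥ es) + t * (ψs ⬝ᵥ p) = 0 := by
            have := congrArg (fun q => ψs ⬝ᵥ q) hst
            simpa [dotProduct_add, dotProduct_smul] using this
          rw [hψp, mul_zero, add_zero] at hdot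
          have hs0 : s = 0 := by
            rcases mul_eq_zero.mp hdot with h | h
            · exact h
            · exact absurd h hnondeg
          refine ⟨hs0, ?_⟩
          rw [hs0, zero_smul, zero_add] at hst
          rcases smul_eq_zero.mp hst with h | h
          · exact h
          · exact absurd h hp0
        have hdvd := aux_two_eigvec A μs es p hli hAes hAp
        have hne : A.charpoly ≠ 0 := (Matrix.charpoly_monic A).ne_zero
        have h2 := (Polynomial.le_rootMultiplicity_iff hne).mpr hdvd
        omega
      by_cases hx0 : x = 0
      · by_cases hy0 : y = 0
        · apply huv0
          funext i
          have h1 : (uv i).re = 0 := congrFun hx0 i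
          have h2 : (uv i).im = 0 := congrFun hy0 i
          exact Complex.ext h1 h2
        · exact key y hy0 hyev hψy
      · exact key x hx0 hxev hψx
    · -- strict gap
      rw [hζnorm] at hζlt
      exact (mul_lt_mul_iff_right₀ hμs0).mp (lt_of_lt_of_eq hζlt (mul_one _).symm)
  -- conclude
  have hwcW : cx w ∈ W := by
    rw [hWmem]
    constructor
    · rw [hψc, hdotcx, hψw, Complex.ofReal_zero]
    · have heq : ∀ k : ℕ, (Ac ^ k).mulVec (cx w) = cx ((A ^ k).mulVec w) := by
        intro k; rw [← hpow, hmap]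
      simp only [heq]
      rw [tendsto_pi_nhds]
      intro i
      have hcomp := tendsto_pi_nhds.mp hWten i
      have := (Complex.continuous_ofReal.tendsto 0).comp hcomp
      simpa [Function.comp_def, hcx] using this
  have htend := aux_decay g hspec ⟨cx w, hwcW⟩
  refine ⟨c, hc0, ?_⟩
  have hfun : (fun k : ℕ => ‖(A ^ k).mulVec v - (c * μs ^ k) • es‖ / |μs| ^ k)
      = fun k : ℕ => ‖(g ^ k) (⟨cx w, hwcW⟩ : W)‖ := by
    funext k
    have h1 : ‖(g ^ k) (⟨cx w, hwcW⟩ : W)‖ = ‖(((g ^ k) (⟨cx w, hwcW⟩ : W)) : Fin n → ℂ)‖ := rfl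
    rw [h1, hval]
    have h2 : (Ac ^ k).mulVec (cx w) = cx ((A ^ k).mulVec w) := by rw [← hpow, hmap]
    rw [h2, norm_smul, hnormcx, norm_pow, norm_inv, Complex.norm_real, Real.norm_eq_abs,
      hAw, inv_pow, div_eq_mul_inv, mul_comm]
  rw [hfun]
  exact htend
end

section
/- Let μ_u > 1, and let c^u, c^l : ℝ × ℝ² → ℝ be continuous with c^l(0,0) ≠ 0. Suppose R_ν(u,λ) is a remainder with sup over a fixed neighborhood of |R_ν|/μ_u^{−ν} → 0. Consider the system λ_r + c^u(u,λ)·μ_sν + r_ν(u,λ) = 0, λ_l − u² + c^l(u,λ)·μ_u^{−ν} + R_ν(u,λ) = 0 with μ_s ∈ (0,1) and r_ν = o(μ_sν) uniformly, all functions C¹ with derivatives obeying the same smallness. Then for every sufficiently large ν and every u in a fixed neighborhood of 0 there is a unique solution λ(u,ν) = (λ_r, λ_l)(u,ν) near 0, and λ(u,ν) → (0, u²) uniformly in u as ν → ∞. -/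
open Filter

set_option maxHeartbeats 1000000

/-- Lemma `turning`: for each large `ν` the bifurcation system for `1`-homoclinic
orbits can be solved uniquely for `λ = λ(u,ν)` near `0`, and the solution curves
converge uniformly to the unperturbed parabola `(0, u²)`. -/
theorem stmt_12 (μs μu : ℝ) (hμs : μs ∈ Set.Ioo (0:ℝ) 1) (hμu : 1 < μu)
    (cu cl : ℝ → ℝ × ℝ → ℝ)
    (hcu : ContDiff ℝ 1 (fun p : ℝ × (ℝ × ℝ) => cu p.1 p.2))
    (hcl : ContDiff ℝ 1 (fun p : ℝ × (ℝ × ℝ) => cl p.1 p.2))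
    (hcl0 : cl 0 (0, 0) ≠ 0)
    (ρ : ℝ) (hρ : 0 < ρ)
    (r R : ℕ → ℝ → ℝ × ℝ → ℝ)
    (hrC1 : ∀ ν : ℕ, ContDiff ℝ 1 (fun p : ℝ × (ℝ × ℝ) => r ν p.1 p.2))
    (hRC1 : ∀ ν : ℕ, ContDiff ℝ 1 (fun p : ℝ × (ℝ × ℝ) => R ν p.1 p.2))
    (hr : ∀ ε > (0:ℝ), ∃ N : ℕ, ∀ ν ≥ N, ∀ u : ℝ, |u| ≤ ρ →
      ∀ lam : ℝ × ℝ, ‖lam‖ ≤ ρ →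
        |r ν u lam| ≤ ε * μs ^ ν ∧
        ‖fderiv ℝ (fun p : ℝ × (ℝ × ℝ) => r ν p.1 p.2) (u, lam)‖ ≤ ε * μs ^ ν)
    (hR : ∀ ε > (0:ℝ), ∃ N : ℕ, ∀ ν ≥ N, ∀ u : ℝ, |u| ≤ ρ →
      ∀ lam : ℝ × ℝ, ‖lam‖ ≤ ρ →
        |R ν u lam| ≤ ε * (μu ^ ν)⁻¹ ∧
        ‖fderiv ℝ (fun p : ℝ × (ℝ × ℝ) => R ν p.1 p.2) (u, lam)‖ ≤ ε * (μu ^ ν)⁻¹) :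
    ∃ δ > (0:ℝ), ∃ N : ℕ, ∃ L : ℕ → ℝ → ℝ × ℝ,
      (∀ ν > N, ∀ u : ℝ, |u| ≤ δ →
        ‖L ν u‖ ≤ δ ∧
        (L ν u).1 + cu u (L ν u) * μs ^ ν + r ν u (L ν u) = 0 ∧
        (L ν u).2 - u ^ 2 + cl u (L ν u) * (μu ^ ν)⁻¹ + R ν u (L ν u) = 0 ∧
        (∀ lam : ℝ × ℝ, ‖lam‖ ≤ δ →
          lam.1 + cu u lam * μs ^ ν + r ν u lam = 0 →
          lam.2 - u ^ 2 + cl u lam * (μu ^ ν)⁻¹ + R ν u lam = 0 →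
          lam = L ν u)) ∧
      (∀ ε > (0:ℝ), ∃ M : ℕ, ∀ ν ≥ M, ∀ u : ℝ, |u| ≤ δ →
        ‖L ν u - (0, u ^ 2)‖ ≤ ε) := by
  classical
  obtain ⟨hμs0, hμs1⟩ := hμs
  have hμu0 : (0:ℝ) < μu := lt_trans one_pos hμu
  set δ : ℝ := min ρ (1/2) with hδdef
  have hδpos : 0 < δ := lt_min hρ (by norm_num)
  have hδρ : δ ≤ ρ := min_le_left _ _
  have hδhalf : δ ≤ 1/2 := min_le_right _ _
  -- the compact convex set where all estimates hold
  set S : Set (ℝ × (ℝ × ℝ)) := Metric.closedBall 0 ρ with hSdef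
  have hScompact : IsCompact S := isCompact_closedBall _ _
  have hSconv : Convex ℝ S := convex_closedBall _ _
  have hmemS : ∀ (u : ℝ) (lam : ℝ × ℝ), |u| ≤ ρ → ‖lam‖ ≤ ρ →
      ((u, lam) : ℝ × (ℝ × ℝ)) ∈ S := by
    intro u lam hu hl
    rw [hSdef, Metric.mem_closedBall, dist_zero_right, Prod.norm_def]
    exact max_le (by simpa using hu) hl
  have hSmem : ∀ p : ℝ × (ℝ × ℝ), p ∈ S → |p.1| ≤ ρ ∧ ‖p.2‖ ≤ ρ := by
    intro p hp
    rw [hSdef, Metric.mem_closedBall, dist_zero_right, Prod.norm_def] at hp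
    exact ⟨by simpa using le_trans (le_max_left _ _) hp,
      le_trans (le_max_right _ _) hp⟩
  -- bounds on cu, cl and their derivatives
  obtain ⟨K1, hK1⟩ := hScompact.exists_bound_of_continuousOn hcu.continuous.continuousOn
  obtain ⟨K2, hK2⟩ := hScompact.exists_bound_of_continuousOn hcl.continuous.continuousOn
  obtain ⟨K3, hK3⟩ := hScompact.exists_bound_of_continuousOn
    ((hcu.continuous_fderiv one_ne_zero).continuousOn)
  obtain ⟨K4, hK4⟩ := hScompact.exists_bound_of_continuousOn
    ((hcl.continuous_fderiv one_ne_zero).continuousOn)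
  set B : ℝ := max (max K1 K2) (max K3 K4) with hBdef
  have hK1B : K1 ≤ B := le_trans (le_max_left _ _) (le_max_left _ _)
  have hK2B : K2 ≤ B := le_trans (le_max_right _ _) (le_max_left _ _)
  have hK3B : K3 ≤ B := le_trans (le_max_left _ _) (le_max_right _ _)
  have hK4B : K4 ≤ B := le_trans (le_max_right _ _) (le_max_right _ _)
  have h0S : ((0:ℝ), ((0:ℝ),(0:ℝ))) ∈ S := hmemS 0 0 (by simpa using hρ.le) (by simpa using hρ.le)
  have hB0 : 0 ≤ B := le_trans (norm_nonneg _) (le_trans (hK1 _ h0S) hK1B)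
  set C : ℝ := B + 1 with hCdef
  have hC0 : 0 < C := by linarith
  -- smallness of the perturbations
  obtain ⟨N0, hN0⟩ := hr 1 one_pos
  obtain ⟨N0', hN0'⟩ := hR 1 one_pos
  have hμsTo : Filter.Tendsto (fun ν : ℕ => C * μs ^ ν) atTop (nhds 0) := by
    simpa using (tendsto_pow_atTop_nhds_zero_of_lt_one hμs0.le hμs1).const_mul C
  have hμuTo : Filter.Tendsto (fun ν : ℕ => C * (μu ^ ν)⁻¹) atTop (nhds 0) := by
    have h1 : Filter.Tendsto (fun ν : ℕ => (μu⁻¹) ^ ν) atTop (nhds 0) :=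
      tendsto_pow_atTop_nhds_zero_of_lt_one (by positivity) (inv_lt_one_of_one_lt₀ hμu)
    simpa [inv_pow] using h1.const_mul C
  obtain ⟨N1, hN1⟩ := (Filter.eventually_atTop).1 (hμsTo.eventually_lt_const hδpos)
  obtain ⟨N2, hN2⟩ := (Filter.eventually_atTop).1 (hμuTo.eventually_lt_const (by linarith : (0:ℝ) < δ/2))
  set N : ℕ := max (max N0 N0') (max N1 N2) with hNdef
  have hNN0 : N0 ≤ N := le_trans (le_max_left _ _) (le_max_left _ _)
  have hNN0' : N0' ≤ N := le_trans (le_max_right _ _) (le_max_left _ _)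
  have hNN1 : N1 ≤ N := le_trans (le_max_left _ _) (le_max_right _ _)
  have hNN2 : N2 ≤ N := le_trans (le_max_right _ _) (le_max_right _ _)
  -- the key existence and uniqueness statement
  have key : ∀ ν > N, ∀ u : ℝ, |u| ≤ δ → ∃ lam : ℝ × ℝ,
      ‖lam‖ ≤ δ ∧
      lam.1 + cu u lam * μs ^ ν + r ν u lam = 0 ∧
      lam.2 - u ^ 2 + cl u lam * (μu ^ ν)⁻¹ + R ν u lam = 0 ∧
      (∀ lam' : ℝ × ℝ, ‖lam'‖ ≤ δ →
        lam'.1 + cu u lam' * μs ^ ν + r ν u lam' = 0 →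
        lam'.2 - u ^ 2 + cl u lam' * (μu ^ ν)⁻¹ + R ν u lam' = 0 →
        lam' = lam) := by
    intro ν hν u hu
    have hνN0 : ν ≥ N0 := le_trans hNN0 hν.le
    have hνN0' : ν ≥ N0' := le_trans hNN0' hν.le
    have hsmall1 : C * μs ^ ν < δ := hN1 ν (le_trans hNN1 hν.le)
    have hsmall2 : C * (μu ^ ν)⁻¹ < δ/2 := hN2 ν (le_trans hNN2 hν.le)
    have huρ : |u| ≤ ρ := hu.trans hδρ
    have hμspow : 0 < μs ^ ν := pow_pos hμs0 ν
    have hμupow : 0 < (μu ^ ν)⁻¹ := by positivity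
    set F : ℝ × ℝ → ℝ × ℝ := fun lam =>
      (-(cu u lam * μs ^ ν) - r ν u lam,
        u ^ 2 - cl u lam * (μu ^ ν)⁻¹ - R ν u lam) with hFdef
    -- self map
    have hmap : ∀ lam : ℝ × ℝ, ‖lam‖ ≤ δ → ‖F lam‖ ≤ δ := by
      intro lam hl
      have hlρ : ‖lam‖ ≤ ρ := hl.trans hδρ
      have hmem := hmemS u lam huρ hlρ
      have hb1 : |cu u lam| ≤ B := le_trans (hK1 _ hmem) hK1B
      have hb2 : |cl u lam| ≤ B := le_trans (hK2 _ hmem) hK2B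
      have hrb := (hN0 ν hνN0 u huρ lam hlρ).1
      have hRb := (hN0' ν hνN0' u huρ lam hlρ).1
      rw [Prod.norm_def]
      have h1 : |(F lam).1| ≤ δ := by
        have : |(F lam).1| ≤ |cu u lam| * μs ^ ν + |r ν u lam| := by
          simp only [hFdef]
          calc |(-(cu u lam * μs ^ ν) - r ν u lam)|
              ≤ |cu u lam * μs ^ ν| + |r ν u lam| := by
                rw [← abs_neg (cu u lam * μs ^ ν)] ; exact abs_sub _ _
            _ = |cu u lam| * μs ^ ν + |r ν u lam| := by
                rw [abs_mul, abs_of_pos hμspow]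
        have : |(F lam).1| ≤ C * μs ^ ν := by
          rw [hCdef]
          calc |(F lam).1| ≤ |cu u lam| * μs ^ ν + |r ν u lam| := this
            _ ≤ B * μs ^ ν + 1 * μs ^ ν :=
                add_le_add (mul_le_mul_of_nonneg_right hb1 hμspow.le) hrb
            _ = (B + 1) * μs ^ ν := by ring
        linarith
      have h2 : |(F lam).2| ≤ δ := by
        have hu2 : u ^ 2 ≤ δ ^ 2 := by
          have := sq_abs u
          nlinarith [abs_nonneg u]
        have hδ2 : δ ^ 2 ≤ δ / 2 := by nlinarith
        have hbound : |(F lam).2| ≤ u ^ 2 + (|cl u lam| * (μu ^ ν)⁻¹ + |R ν u lam|) := by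
          simp only [hFdef]
          calc |u ^ 2 - cl u lam * (μu ^ ν)⁻¹ - R ν u lam|
              ≤ |u ^ 2 - cl u lam * (μu ^ ν)⁻¹| + |R ν u lam| := abs_sub _ _
            _ ≤ |u ^ 2| + |cl u lam * (μu ^ ν)⁻¹| + |R ν u lam| := by
                have := abs_sub (u ^ 2) (cl u lam * (μu ^ ν)⁻¹)
                linarith
            _ = u ^ 2 + (|cl u lam| * (μu ^ ν)⁻¹ + |R ν u lam|) := by
                rw [abs_mul, abs_of_pos hμupow, abs_of_nonneg (sq_nonneg u)]; ring
        have htail : |cl u lam| * (μu ^ ν)⁻¹ + |R ν u lam| ≤ C * (μu ^ ν)⁻¹ := by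
          rw [hCdef]
          calc |cl u lam| * (μu ^ ν)⁻¹ + |R ν u lam|
              ≤ B * (μu ^ ν)⁻¹ + 1 * (μu ^ ν)⁻¹ :=
                add_le_add (mul_le_mul_of_nonneg_right hb2 hμupow.le) hRb
            _ = (B + 1) * (μu ^ ν)⁻¹ := by ring
        calc |(F lam).2| ≤ u ^ 2 + (|cl u lam| * (μu ^ ν)⁻¹ + |R ν u lam|) := hbound
          _ ≤ δ ^ 2 + C * (μu ^ ν)⁻¹ := by linarith
          _ ≤ δ / 2 + δ / 2 := by linarith
          _ = δ := by ring
      exact max_le h1 h2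
    -- Lipschitz estimate
    have hlip : ∀ lam lam' : ℝ × ℝ, ‖lam‖ ≤ δ → ‖lam'‖ ≤ δ →
        ‖F lam - F lam'‖ ≤ (1/2) * ‖lam - lam'‖ := by
      intro lam lam' hl hl'
      have hlρ : ‖lam‖ ≤ ρ := hl.trans hδρ
      have hlρ' : ‖lam'‖ ≤ ρ := hl'.trans hδρ
      have hmem := hmemS u lam huρ hlρ
      have hmem' := hmemS u lam' huρ hlρ'
      have hd : ‖(((0:ℝ), lam - lam') : ℝ × (ℝ × ℝ))‖ = ‖lam - lam'‖ := by
        rw [Prod.norm_def]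
        simp [max_eq_right (norm_nonneg (lam - lam'))]
      -- mean value estimates
      have hcud : |cu u lam - cu u lam'| ≤ B * ‖lam - lam'‖ := by
        have := hSconv.norm_image_sub_le_of_norm_fderiv_le
          (f := fun p : ℝ × (ℝ × ℝ) => cu p.1 p.2)
          (fun p _ => (hcu.differentiable one_ne_zero).differentiableAt)
          (fun p hp => le_trans (hK3 p hp) hK3B) hmem' hmem
        simpa [hd] using this
      have hcld : |cl u lam - cl u lam'| ≤ B * ‖lam - lam'‖ := by
        have := hSconv.norm_image_sub_le_of_norm_fderiv_le
          (f := fun p : ℝ × (ℝ × ℝ) => cl p.1 p.2)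
          (fun p _ => (hcl.differentiable one_ne_zero).differentiableAt)
          (fun p hp => le_trans (hK4 p hp) hK4B) hmem' hmem
        simpa [hd] using this
      have hrd : |r ν u lam - r ν u lam'| ≤ μs ^ ν * ‖lam - lam'‖ := by
        have := hSconv.norm_image_sub_le_of_norm_fderiv_le
          (f := fun p : ℝ × (ℝ × ℝ) => r ν p.1 p.2)
          (fun p _ => ((hrC1 ν).differentiable one_ne_zero).differentiableAt)
          (fun p hp => by
            obtain ⟨hp1, hp2⟩ := hSmem p hp
            have := (hN0 ν hνN0 p.1 hp1 p.2 hp2).2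
            simpa using this) hmem' hmem
        simpa [hd] using this
      have hRd : |R ν u lam - R ν u lam'| ≤ (μu ^ ν)⁻¹ * ‖lam - lam'‖ := by
        have := hSconv.norm_image_sub_le_of_norm_fderiv_le
          (f := fun p : ℝ × (ℝ × ℝ) => R ν p.1 p.2)
          (fun p _ => ((hRC1 ν).differentiable one_ne_zero).differentiableAt)
          (fun p hp => by
            obtain ⟨hp1, hp2⟩ := hSmem p hp
            have := (hN0' ν hνN0' p.1 hp1 p.2 hp2).2
            simpa using this) hmem' hmem
        simpa [hd] using this
      have hΔ0 : (0:ℝ) ≤ ‖lam - lam'‖ := norm_nonneg _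
      have h1 : |(F lam).1 - (F lam').1| ≤ (1/2) * ‖lam - lam'‖ := by
        have heq : (F lam).1 - (F lam').1 =
            -((cu u lam - cu u lam') * μs ^ ν) - (r ν u lam - r ν u lam') := by
          simp only [hFdef]; ring
        calc |(F lam).1 - (F lam').1|
            ≤ |cu u lam - cu u lam'| * μs ^ ν + |r ν u lam - r ν u lam'| := by
              rw [heq]
              calc |(-((cu u lam - cu u lam') * μs ^ ν) - (r ν u lam - r ν u lam'))|
                  ≤ |(cu u lam - cu u lam') * μs ^ ν| + |r ν u lam - r ν u lam'| := by
                    rw [← abs_neg ((cu u lam - cu u lam') * μs ^ ν)]; exact abs_sub _ _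
                _ = |cu u lam - cu u lam'| * μs ^ ν + |r ν u lam - r ν u lam'| := by
                    rw [abs_mul, abs_of_pos hμspow]
          _ ≤ (B * ‖lam - lam'‖) * μs ^ ν + μs ^ ν * ‖lam - lam'‖ := by gcongr
          _ = (C * μs ^ ν) * ‖lam - lam'‖ := by rw [hCdef]; ring
          _ ≤ (1/2) * ‖lam - lam'‖ := by
              have : C * μs ^ ν ≤ 1/2 := le_trans hsmall1.le (by linarith)
              gcongr
      have h2 : |(F lam).2 - (F lam').2| ≤ (1/2) * ‖lam - lam'‖ := by
        have heq : (F lam).2 - (F lam').2 =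
            -((cl u lam - cl u lam') * (μu ^ ν)⁻¹) - (R ν u lam - R ν u lam') := by
          simp only [hFdef]; ring
        calc |(F lam).2 - (F lam').2|
            ≤ |cl u lam - cl u lam'| * (μu ^ ν)⁻¹ + |R ν u lam - R ν u lam'| := by
              rw [heq]
              calc |(-((cl u lam - cl u lam') * (μu ^ ν)⁻¹) - (R ν u lam - R ν u lam'))|
                  ≤ |(cl u lam - cl u lam') * (μu ^ ν)⁻¹| + |R ν u lam - R ν u lam'| := by
                    rw [← abs_neg ((cl u lam - cl u lam') * (μu ^ ν)⁻¹)]; exact abs_sub _ _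
                _ = |cl u lam - cl u lam'| * (μu ^ ν)⁻¹ + |R ν u lam - R ν u lam'| := by
                    rw [abs_mul, abs_of_pos hμupow]
          _ ≤ (B * ‖lam - lam'‖) * (μu ^ ν)⁻¹ + (μu ^ ν)⁻¹ * ‖lam - lam'‖ := by gcongr
          _ = (C * (μu ^ ν)⁻¹) * ‖lam - lam'‖ := by rw [hCdef]; ring
          _ ≤ (1/2) * ‖lam - lam'‖ := by
              have : C * (μu ^ ν)⁻¹ ≤ 1/2 := le_trans hsmall2.le (by linarith)
              gcongr
      calc ‖F lam - F lam'‖ = max |(F lam).1 - (F lam').1| |(F lam).2 - (F lam').2| := by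
            rw [Prod.norm_def]; rfl
        _ ≤ (1/2) * ‖lam - lam'‖ := max_le h1 h2
    -- Banach fixed point on the closed ball
    set s : Set (ℝ × ℝ) := Metric.closedBall 0 δ with hsdef
    haveI : CompleteSpace s := Metric.isClosed_closedBall.completeSpace_coe
    haveI : Nonempty s := ⟨⟨0, Metric.mem_closedBall_self hδpos.le⟩⟩
    have hmem_iff : ∀ x : ℝ × ℝ, x ∈ s ↔ ‖x‖ ≤ δ := by
      intro x; rw [hsdef, Metric.mem_closedBall, dist_zero_right]
    set f : s → s := fun x => ⟨F x.1, (hmem_iff _).2 (hmap x.1 ((hmem_iff _).1 x.2))⟩ with hfdef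
    have hcontr : ContractingWith (1/2 : NNReal) f := by
      have hKlt : (1/2 : NNReal) < 1 := by
        rw [← NNReal.coe_lt_coe]; norm_num
      refine ⟨hKlt, LipschitzWith.of_dist_le_mul ?_⟩
      intro x y
      rw [Subtype.dist_eq, dist_eq_norm, Subtype.dist_eq, dist_eq_norm]
      have h2 : ((1/2 : NNReal) : ℝ) = 1/2 := by norm_num
      rw [h2]
      exact hlip x.1 y.1 ((hmem_iff _).1 x.2) ((hmem_iff _).1 y.2)
    set L0 : s := ContractingWith.fixedPoint f hcontr with hL0def
    have hfix : F L0.1 = L0.1 := congrArg Subtype.val hcontr.fixedPoint_isFixedPt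
    have hfix1 : -(cu u L0.1 * μs ^ ν) - r ν u L0.1 = (L0.1 : ℝ × ℝ).1 := congrArg Prod.fst hfix
    have hfix2 : u ^ 2 - cl u L0.1 * (μu ^ ν)⁻¹ - R ν u L0.1 = (L0.1 : ℝ × ℝ).2 :=
      congrArg Prod.snd hfix
    refine ⟨L0.1, (hmem_iff _).1 L0.2, by linarith, by linarith, ?_⟩
    intro lam' hl' he1 he2
    have hFl : F lam' = lam' := by
      have e1 : (F lam').1 = lam'.1 := by simp only [hFdef]; linarith
      have e2 : (F lam').2 = lam'.2 := by simp only [hFdef]; linarith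
      exact Prod.ext e1 e2
    have hfx : Function.IsFixedPt f ⟨lam', (hmem_iff _).2 hl'⟩ := Subtype.ext hFl
    exact congrArg Subtype.val (hcontr.fixedPoint_unique hfx)
  -- define the solution curves
  set L : ℕ → ℝ → ℝ × ℝ := fun ν u =>
    if h : N < ν ∧ |u| ≤ δ then (key ν h.1 u h.2).choose else 0 with hLdef
  have hLspec : ∀ ν > N, ∀ u : ℝ, |u| ≤ δ →
      ‖L ν u‖ ≤ δ ∧
      (L ν u).1 + cu u (L ν u) * μs ^ ν + r ν u (L ν u) = 0 ∧
      (L ν u).2 - u ^ 2 + cl u (L ν u) * (μu ^ ν)⁻¹ + R ν u (L ν u) = 0 ∧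
      (∀ lam : ℝ × ℝ, ‖lam‖ ≤ δ →
        lam.1 + cu u lam * μs ^ ν + r ν u lam = 0 →
        lam.2 - u ^ 2 + cl u lam * (μu ^ ν)⁻¹ + R ν u lam = 0 →
        lam = L ν u) := by
    intro ν hν u hu
    have h : N < ν ∧ |u| ≤ δ := ⟨hν, hu⟩
    have hL : L ν u = (key ν h.1 u h.2).choose := by rw [hLdef]; exact dif_pos h
    rw [hL]
    exact (key ν h.1 u h.2).choose_spec
  refine ⟨δ, hδpos, N, L, hLspec, ?_⟩
  -- uniform convergence to the parabola
  intro ε hε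
  obtain ⟨M1, hM1⟩ := (Filter.eventually_atTop).1 (hμsTo.eventually_lt_const hε)
  obtain ⟨M2, hM2⟩ := (Filter.eventually_atTop).1 (hμuTo.eventually_lt_const hε)
  refine ⟨max (max M1 M2) (N + 1), ?_⟩
  intro ν hν u hu
  have hνN : ν > N := lt_of_lt_of_le (Nat.lt_succ_self N)
    (le_trans (le_max_right _ _) hν)
  have hνM1 : ν ≥ M1 := le_trans (le_trans (le_max_left _ _) (le_max_left _ _)) hν
  have hνM2 : ν ≥ M2 := le_trans (le_trans (le_max_right _ _) (le_max_left _ _)) hν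
  obtain ⟨hnorm, he1, he2, _⟩ := hLspec ν hνN u hu
  have huρ : |u| ≤ ρ := hu.trans hδρ
  have hlρ : ‖L ν u‖ ≤ ρ := hnorm.trans hδρ
  have hmem := hmemS u (L ν u) huρ hlρ
  have hb1 : |cu u (L ν u)| ≤ B := le_trans (hK1 _ hmem) hK1B
  have hb2 : |cl u (L ν u)| ≤ B := le_trans (hK2 _ hmem) hK2B
  have hνN0 : ν ≥ N0 := le_trans hNN0 hνN.le
  have hνN0' : ν ≥ N0' := le_trans hNN0' hνN.le
  have hrb := (hN0 ν hνN0 u huρ (L ν u) hlρ).1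
  have hRb := (hN0' ν hνN0' u huρ (L ν u) hlρ).1
  have hμspow : 0 < μs ^ ν := pow_pos hμs0 ν
  have hμupow : 0 < (μu ^ ν)⁻¹ := by positivity
  have h1 : |(L ν u).1| ≤ ε := by
    have heq : (L ν u).1 = -(cu u (L ν u) * μs ^ ν) - r ν u (L ν u) := by linarith
    calc |(L ν u).1| ≤ |cu u (L ν u) * μs ^ ν| + |r ν u (L ν u)| := by
          rw [heq, ← abs_neg (cu u (L ν u) * μs ^ ν)]; exact abs_sub _ _
      _ ≤ B * μs ^ ν + 1 * μs ^ ν := by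
          rw [abs_mul, abs_of_pos hμspow]
          exact add_le_add (mul_le_mul_of_nonneg_right hb1 hμspow.le) hrb
      _ = C * μs ^ ν := by rw [hCdef]; ring
      _ ≤ ε := (hM1 ν hνM1).le
  have h2 : |(L ν u).2 - u ^ 2| ≤ ε := by
    have heq : (L ν u).2 - u ^ 2 = -(cl u (L ν u) * (μu ^ ν)⁻¹) - R ν u (L ν u) := by linarith
    calc |(L ν u).2 - u ^ 2| ≤ |cl u (L ν u) * (μu ^ ν)⁻¹| + |R ν u (L ν u)| := by
          rw [heq, ← abs_neg (cl u (L ν u) * (μu ^ ν)⁻¹)]; exact abs_sub _ _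
      _ ≤ B * (μu ^ ν)⁻¹ + 1 * (μu ^ ν)⁻¹ := by
          rw [abs_mul, abs_of_pos hμupow]
          exact add_le_add (mul_le_mul_of_nonneg_right hb2 hμupow.le) hRb
      _ = C * (μu ^ ν)⁻¹ := by rw [hCdef]; ring
      _ ≤ ε := (hM2 ν hνM2).le
  calc ‖L ν u - (0, u ^ 2)‖ = max |(L ν u).1 - 0| |(L ν u).2 - u ^ 2| := by
        rw [Prod.norm_def]; rfl
    _ ≤ ε := max_le (by simpa using h1) h2
end
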